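/- Let σ₀, σ₁, σ₂ : ℝ² → ℝ be nonnegative integrable functions, each with total integral 1, satisfying the compatibility conditions: for almost every q₂, ∫ σ₀(q₁,q₂) dq₁ = ∫ σ₁(p₁,q₂) dp₁ (call this common value σ₀₁(q₂)), and for almost every p₁, ∫ σ₁(p₁,q₂) dq₂ = ∫ σ₂(p₁,p₂) dp₂ (call this σ₁₂(p₁)). Define ρ₀ : ℝ⁴ → ℝ by ρ₀(q₁,q₂,p₁,p₂) = σ₀(q₁,q₂) σ₁(p₁,q₂) σ₂(p₁,p₂) / (σ₀₁(q₂) σ₁₂(p₁)) whenever σ₀₁(q₂) > 0 and σ₁₂(p₁) > 0, and ρ₀ = 0 otherwise. Then ρ₀ is nonnegative, integrable on ℝ⁴ with total integral 1, and satisfies the three marginal conditions: for almost every (q₁,q₂), ∫∫ ρ₀(q₁,q₂,p₁,p₂) dp₁ dp₂ = σ₀(q₁,q₂); for almost every (p₁,q₂), ∫∫ ρ₀(q₁,q₂,p₁,p₂) dq₁ dp₂ = σ₁(p₁,q₂); and for almost every (p₁,p₂), ∫∫ ρ₀(q₁,q₂,p₁,p₂) dq₁ dq₂ = σ₂(p₁,p₂).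 -/

import Mathlib

open MeasureTheory Filter

section Helpers

lemma ae_fst_lift {p : ℝ → Prop} (h : ∀ᵐ x : ℝ ∂volume, p x) :
    ∀ᵐ z : ℝ × ℝ ∂volume, p z.1 := by
  rw [Measure.volume_eq_prod]
  exact Measure.quasiMeasurePreserving_fst.ae h

lemma ae_snd_lift {p : ℝ → Prop} (h : ∀ᵐ x : ℝ ∂volume, p x) :
    ∀ᵐ z : ℝ × ℝ ∂volume, p z.2 := by
  rw [Measure.volume_eq_prod]
  exact Measure.quasiMeasurePreserving_snd.ae h

lemma ae_swap_lift {p : ℝ × ℝ → Prop} (h : ∀ᵐ z : ℝ × ℝ ∂volume, p z) :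
    ∀ᵐ z : ℝ × ℝ ∂volume, p (z.2, z.1) := by
  rw [Measure.volume_eq_prod] at h ⊢
  exact Measure.measurePreserving_swap.quasiMeasurePreserving.ae h

lemma ae_ae_of_ae_vol {p : ℝ × ℝ → Prop} (h : ∀ᵐ z : ℝ × ℝ ∂volume, p z) :
    ∀ᵐ x : ℝ ∂volume, ∀ᵐ y : ℝ ∂volume, p (x, y) := by
  rw [Measure.volume_eq_prod] at h
  exact Measure.ae_ae_of_ae_prod h

lemma aesm_ite_div {a f : ℝ → ℝ} (ha : AEStronglyMeasurable a (volume : Measure ℝ))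
    (hf : AEStronglyMeasurable f (volume : Measure ℝ)) :
    AEStronglyMeasurable (fun x => if 0 < a x then f x / a x else 0) (volume : Measure ℝ) := by
  obtain ⟨a', ha'm, haa'⟩ := ha
  obtain ⟨f', hf'm, hff'⟩ := hf
  refine ⟨fun x => if 0 < a' x then f' x / a' x else 0, ?_, ?_⟩
  · exact (Measurable.ite (measurableSet_lt measurable_const ha'm.measurable)
      (hf'm.measurable.div ha'm.measurable) measurable_const).stronglyMeasurable
  · filter_upwards [haa', hff'] with x h1 h2
    rw [h1, h2]

/-- If `g x` is a.e. the integral of the nonnegative integrable `f` over the second variable,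
then a.e. on the product, `g z.1 = 0` implies `f z = 0`. -/
lemma ae_zero_of_fst {f : ℝ × ℝ → ℝ} {g : ℝ → ℝ}
    (hf : Integrable f (volume : Measure (ℝ × ℝ)))
    (hnn : ∀ x, 0 ≤ f x)
    (hg : ∀ᵐ x : ℝ ∂volume, g x = ∫ y, f (x, y)) :
    ∀ᵐ z : ℝ × ℝ ∂volume, g z.1 = 0 → f z = 0 := by
  rw [Measure.volume_eq_prod] at hf ⊢
  obtain ⟨f', hf'm, hff'⟩ := hf.aestronglyMeasurable
  have hgm : AEStronglyMeasurable g (volume : Measure ℝ) :=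
    (hf.aestronglyMeasurable.integral_prod_right').congr
      (by filter_upwards [hg] with x hx using hx.symm)
  obtain ⟨g', hg'm, hgg'⟩ := hgm
  have hSm : MeasurableSet {z : ℝ × ℝ | g' z.1 = 0 ∧ f' z ≠ 0} := by
    have h1 : MeasurableSet {z : ℝ × ℝ | g' z.1 = 0} :=
      (hg'm.measurable.comp measurable_fst) (measurableSet_singleton 0)
    have h2 : MeasurableSet {z : ℝ × ℝ | f' z ≠ 0} :=
      (hf'm.measurable (measurableSet_singleton 0)).compl
    exact h1.inter h2
  have hS0 : (volume.prod volume) {z : ℝ × ℝ | g' z.1 = 0 ∧ f' z ≠ 0} = 0 := by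
    rw [Measure.prod_apply hSm]
    have hae : ∀ᵐ x : ℝ ∂volume,
        (volume (Prod.mk x ⁻¹' {z : ℝ × ℝ | g' z.1 = 0 ∧ f' z ≠ 0})) = 0 := by
      filter_upwards [hg, hgg', Measure.ae_ae_of_ae_prod hff', hf.prod_right_ae]
        with x hgx hggx hffx hfint
      by_cases hx : g' x = 0
      · have h0 : (∫ y, f (x, y)) = 0 := by rw [← hgx, hggx, hx]
        have hzero : (fun y => f (x, y)) =ᵐ[volume] 0 :=
          (integral_eq_zero_iff_of_nonneg (fun y => hnn _) hfint).mp h0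
        have hzero' : ∀ᵐ y : ℝ ∂volume, f' (x, y) = 0 := by
          filter_upwards [hffx, hzero] with y h1 h2
          rw [← h1]; exact h2
        refine measure_mono_null ?_ (ae_iff.mp hzero')
        intro y hy
        simp only [Set.mem_preimage, Set.mem_setOf_eq] at hy ⊢
        exact hy.2
      · have : Prod.mk x ⁻¹' {z : ℝ × ℝ | g' z.1 = 0 ∧ f' z ≠ 0} = ∅ := by
          ext y; simp [hx]
        rw [this]; exact measure_empty
    rw [lintegral_congr_ae hae, lintegral_zero]
  have hSc : ∀ᵐ z : ℝ × ℝ ∂volume.prod volume, ¬(g' z.1 = 0 ∧ f' z ≠ 0) := by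
    rw [ae_iff]
    simpa using hS0
  have hgfst : ∀ᵐ z : ℝ × ℝ ∂volume.prod volume, g z.1 = g' z.1 :=
    Measure.quasiMeasurePreserving_fst.ae hgg'
  filter_upwards [hgfst, hff', hSc] with z h1 h2 h3 hz
  rw [h2]
  by_contra h
  exact h3 ⟨h1 ▸ hz, h⟩

lemma ae_zero_of_snd {f : ℝ × ℝ → ℝ} {g : ℝ → ℝ}
    (hf : Integrable f (volume : Measure (ℝ × ℝ)))
    (hnn : ∀ x, 0 ≤ f x)
    (hg : ∀ᵐ y : ℝ ∂volume, g y = ∫ x, f (x, y)) :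
    ∀ᵐ z : ℝ × ℝ ∂volume, g z.2 = 0 → f z = 0 := by
  have hswap : Integrable (fun w : ℝ × ℝ => f (w.2, w.1)) (volume : Measure (ℝ × ℝ)) := by
    rw [Measure.volume_eq_prod] at hf ⊢
    exact hf.swap
  have h := ae_zero_of_fst hswap (fun x => hnn _) hg
  have h2 := ae_swap_lift h
  filter_upwards [h2] with z hz hz2
  simpa using hz hz2

end Helpers


theorem three_marginal_product_solution
    (σ₀ σ₁ σ₂ : ℝ × ℝ → ℝ)
    (h₀int : Integrable σ₀) (h₁int : Integrable σ₁) (h₂int : Integrable σ₂)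
    (h₀pos : ∀ x, 0 ≤ σ₀ x) (h₁pos : ∀ x, 0 ≤ σ₁ x) (h₂pos : ∀ x, 0 ≤ σ₂ x)
    (h₀norm : (∫ x, σ₀ x) = 1) (h₁norm : (∫ x, σ₁ x) = 1) (h₂norm : (∫ x, σ₂ x) = 1)
    (σ₀₁ σ₁₂ : ℝ → ℝ)
    (hσ₀₁ : ∀ q₂ : ℝ, σ₀₁ q₂ = ∫ q₁ : ℝ, σ₀ (q₁, q₂))
    (hσ₁₂ : ∀ p₁ : ℝ, σ₁₂ p₁ = ∫ q₂ : ℝ, σ₁ (p₁, q₂))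
    (hcompat₁ : ∀ᵐ q₂ : ℝ ∂volume, σ₀₁ q₂ = ∫ p₁ : ℝ, σ₁ (p₁, q₂))
    (hcompat₂ : ∀ᵐ p₁ : ℝ ∂volume, σ₁₂ p₁ = ∫ p₂ : ℝ, σ₂ (p₁, p₂))
    (ρ₀ : ℝ → ℝ → ℝ → ℝ → ℝ)
    (hρ₀ : ∀ q₁ q₂ p₁ p₂ : ℝ, ρ₀ q₁ q₂ p₁ p₂ =
      if 0 < σ₀₁ q₂ ∧ 0 < σ₁₂ p₁ then
        σ₀ (q₁, q₂) * σ₁ (p₁, q₂) * σ₂ (p₁, p₂) / (σ₀₁ q₂ * σ₁₂ p₁)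
      else 0) :
    (∀ q₁ q₂ p₁ p₂ : ℝ, 0 ≤ ρ₀ q₁ q₂ p₁ p₂) ∧
    Integrable (fun x : ℝ × ℝ × ℝ × ℝ => ρ₀ x.1 x.2.1 x.2.2.1 x.2.2.2) ∧
    (∫ x : ℝ × ℝ × ℝ × ℝ, ρ₀ x.1 x.2.1 x.2.2.1 x.2.2.2) = 1 ∧
    (∀ᵐ q : ℝ × ℝ ∂volume, (∫ p₁ : ℝ, ∫ p₂ : ℝ, ρ₀ q.1 q.2 p₁ p₂) = σ₀ q) ∧
    (∀ᵐ pq : ℝ × ℝ ∂volume, (∫ q₁ : ℝ, ∫ p₂ : ℝ, ρ₀ q₁ pq.2 pq.1 p₂) = σ₁ pq) ∧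
    (∀ᵐ pp : ℝ × ℝ ∂volume, (∫ q₁ : ℝ, ∫ q₂ : ℝ, ρ₀ q₁ q₂ pp.1 pp.2) = σ₂ pp) := by
  have h01nn : ∀ q₂, 0 ≤ σ₀₁ q₂ := fun q₂ => by
    rw [hσ₀₁]; exact integral_nonneg fun q₁ => h₀pos _
  have h12nn : ∀ p₁, 0 ≤ σ₁₂ p₁ := fun p₁ => by
    rw [hσ₁₂]; exact integral_nonneg fun q₂ => h₁pos _
  have hnn : ∀ q₁ q₂ p₁ p₂ : ℝ, 0 ≤ ρ₀ q₁ q₂ p₁ p₂ := by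
    intro q₁ q₂ p₁ p₂
    rw [hρ₀]
    split_ifs with h
    · exact div_nonneg (mul_nonneg (mul_nonneg (h₀pos _) (h₁pos _)) (h₂pos _))
        (mul_nonneg h.1.le h.2.le)
    · exact le_refl 0
  -- vanishing facts
  have hT1 : ∀ᵐ z : ℝ × ℝ ∂volume, σ₁₂ z.1 = 0 → σ₁ z = 0 :=
    ae_zero_of_fst h₁int h₁pos (Filter.Eventually.of_forall hσ₁₂)
  have hT2 : ∀ᵐ z : ℝ × ℝ ∂volume, σ₁₂ z.1 = 0 → σ₂ z = 0 :=
    ae_zero_of_fst h₂int h₂pos hcompat₂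
  have hT1' : ∀ᵐ z : ℝ × ℝ ∂volume, σ₀₁ z.2 = 0 → σ₁ z = 0 :=
    ae_zero_of_snd h₁int h₁pos hcompat₁
  have hT0 : ∀ᵐ z : ℝ × ℝ ∂volume, σ₀₁ z.2 = 0 → σ₀ z = 0 :=
    ae_zero_of_snd h₀int h₀pos (Filter.Eventually.of_forall hσ₀₁)
  have hT1sw : ∀ᵐ q₂ : ℝ ∂volume, ∀ᵐ p₁ : ℝ ∂volume, σ₁₂ p₁ = 0 → σ₁ (p₁, q₂) = 0 :=
    ae_ae_of_ae_vol (ae_swap_lift hT1)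
  have hT1'sec : ∀ᵐ p₁ : ℝ ∂volume, ∀ᵐ q₂ : ℝ ∂volume, σ₀₁ q₂ = 0 → σ₁ (p₁, q₂) = 0 :=
    ae_ae_of_ae_vol hT1'
  have hT0sec : ∀ᵐ q₁ : ℝ ∂volume, ∀ᵐ q₂ : ℝ ∂volume, σ₀₁ q₂ = 0 → σ₀ (q₁, q₂) = 0 :=
    ae_ae_of_ae_vol hT0
  -- sections
  have h₀int' : Integrable σ₀ ((volume : Measure ℝ).prod volume) := by
    rwa [Measure.volume_eq_prod] at h₀int
  have h₁int' : Integrable σ₁ ((volume : Measure ℝ).prod volume) := by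
    rwa [Measure.volume_eq_prod] at h₁int
  have h₂int' : Integrable σ₂ ((volume : Measure ℝ).prod volume) := by
    rwa [Measure.volume_eq_prod] at h₂int
  have h0secL : ∀ᵐ q₂ : ℝ ∂volume, Integrable (fun q₁ => σ₀ (q₁, q₂)) volume :=
    h₀int'.prod_left_ae
  have h0secR : ∀ᵐ q₁ : ℝ ∂volume, Integrable (fun q₂ => σ₀ (q₁, q₂)) volume :=
    h₀int'.prod_right_ae
  have h1secL : ∀ᵐ q₂ : ℝ ∂volume, Integrable (fun p₁ => σ₁ (p₁, q₂)) volume :=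
    h₁int'.prod_left_ae
  have h1secR : ∀ᵐ p₁ : ℝ ∂volume, Integrable (fun q₂ => σ₁ (p₁, q₂)) volume :=
    h₁int'.prod_right_ae
  have h2secR : ∀ᵐ p₁ : ℝ ∂volume, Integrable (fun p₂ => σ₂ (p₁, p₂)) volume :=
    h₂int'.prod_right_ae
  -- the factorization of ρ₀
  set F : ℝ → ℝ → ℝ → ℝ := fun q₁ q₂ p₁ =>
    if 0 < σ₀₁ q₂ then σ₀ (q₁, q₂) * σ₁ (p₁, q₂) / σ₀₁ q₂ else 0 with hF
  set G : ℝ → ℝ → ℝ := fun p₁ p₂ => if 0 < σ₁₂ p₁ then σ₂ (p₁, p₂) / σ₁₂ p₁ else 0 with hG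
  set χ : ℝ → ℝ := fun p₁ => if 0 < σ₁₂ p₁ then (1 : ℝ) else 0 with hχ
  have hsplit : ∀ q₁ q₂ p₁ p₂, ρ₀ q₁ q₂ p₁ p₂ = F q₁ q₂ p₁ * G p₁ p₂ := by
    intro q₁ q₂ p₁ p₂
    simp only [hρ₀, hF, hG]
    by_cases h1 : 0 < σ₀₁ q₂ <;> by_cases h2 : 0 < σ₁₂ p₁
    · rw [if_pos ⟨h1, h2⟩, if_pos h1, if_pos h2, div_mul_div_comm]
    · rw [if_neg (by tauto), if_pos h1, if_neg h2, mul_zero]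
    · rw [if_neg (by tauto), if_neg h1, if_pos h2, zero_mul]
    · rw [if_neg (by tauto), if_neg h1, if_neg h2, mul_zero]
  have hFnn : ∀ q₁ q₂ p₁, 0 ≤ F q₁ q₂ p₁ := by
    intro q₁ q₂ p₁
    simp only [hF]
    split_ifs with h
    · exact div_nonneg (mul_nonneg (h₀pos _) (h₁pos _)) h.le
    · exact le_refl 0
  have hGnn : ∀ p₁ p₂, 0 ≤ G p₁ p₂ := by
    intro p₁ p₂
    simp only [hG]
    split_ifs with h
    · exact div_nonneg (h₂pos _) h.le
    · exact le_refl 0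
  -- inner p₂-integral of G
  have hGint : ∀ᵐ p₁ : ℝ ∂volume, Integrable (fun p₂ => G p₁ p₂) volume := by
    filter_upwards [h2secR] with p₁ hi
    by_cases hp : 0 < σ₁₂ p₁
    · have := hi.div_const (σ₁₂ p₁)
      simpa only [hG, hp, if_true] using this
    · simp only [hG, hp, if_false]
      exact integrable_zero _ _ _
  have hGχ : ∀ᵐ p₁ : ℝ ∂volume, (∫ p₂, G p₁ p₂) = χ p₁ := by
    filter_upwards [hcompat₂] with p₁ hc
    by_cases hp : 0 < σ₁₂ p₁
    · simp only [hG, hχ, hp, if_true, integral_div]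
      rw [← hc, div_self (ne_of_gt hp)]
    · simp only [hG, hχ, hp, if_false, integral_zero]
  -- the pointwise q₁-integral of F
  have hIF : ∀ q₂ p₁, (∫ q₁, F q₁ q₂ p₁) = (if 0 < σ₀₁ q₂ then σ₁ (p₁, q₂) else 0) := by
    intro q₂ p₁
    by_cases h : 0 < σ₀₁ q₂
    · simp only [hF, h, if_true]
      have hmd : ∀ q₁ : ℝ, σ₀ (q₁, q₂) * σ₁ (p₁, q₂) / σ₀₁ q₂
          = σ₀ (q₁, q₂) * (σ₁ (p₁, q₂) / σ₀₁ q₂) := fun q₁ => mul_div_assoc _ _ _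
      simp only [hmd]
      rw [integral_mul_const, ← hσ₀₁, mul_comm (σ₀₁ q₂), div_mul_cancel₀ _ (ne_of_gt h)]
    · simp only [hF, h, if_false, integral_zero]
  -- the σ₀-marginal computation
  have hM0 : ∀ᵐ q₂ : ℝ ∂volume, ∀ q₁ : ℝ,
      (∫ p₁, ∫ p₂, ρ₀ q₁ q₂ p₁ p₂) = (if 0 < σ₀₁ q₂ then σ₀ (q₁, q₂) else 0) := by
    filter_upwards [hcompat₁, hT1sw] with q₂ hc1 hsw
    intro q₁
    have hstep1 : ∀ p₁, (∫ p₂, ρ₀ q₁ q₂ p₁ p₂) = F q₁ q₂ p₁ * ∫ p₂, G p₁ p₂ := by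
      intro p₁
      simp only [hsplit]
      exact integral_const_mul _ _
    have hstep2 : ∀ p₁, F q₁ q₂ p₁ * χ p₁
        = (if 0 < σ₀₁ q₂ then σ₀ (q₁, q₂) / σ₀₁ q₂ else 0) * (σ₁ (p₁, q₂) * χ p₁) := by
      intro p₁
      simp only [hF]
      split_ifs with h
      · ring
      · simp
    calc (∫ p₁, ∫ p₂, ρ₀ q₁ q₂ p₁ p₂)
        = ∫ p₁, F q₁ q₂ p₁ * ∫ p₂, G p₁ p₂ := by simp only [hstep1]
      _ = ∫ p₁, F q₁ q₂ p₁ * χ p₁ := by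
            apply integral_congr_ae
            filter_upwards [hGχ] with p₁ h
            rw [h]
      _ = ∫ p₁, (if 0 < σ₀₁ q₂ then σ₀ (q₁, q₂) / σ₀₁ q₂ else 0) * (σ₁ (p₁, q₂) * χ p₁) := by
            simp only [hstep2]
      _ = (if 0 < σ₀₁ q₂ then σ₀ (q₁, q₂) / σ₀₁ q₂ else 0) * ∫ p₁, σ₁ (p₁, q₂) * χ p₁ :=
            integral_const_mul _ _
      _ = (if 0 < σ₀₁ q₂ then σ₀ (q₁, q₂) / σ₀₁ q₂ else 0) * ∫ p₁, σ₁ (p₁, q₂) := by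
            congr 1
            apply integral_congr_ae
            filter_upwards [hsw] with p₁ h
            by_cases hp : 0 < σ₁₂ p₁
            · simp only [hχ, hp, if_true, mul_one]
            · have h0 : σ₁₂ p₁ = 0 := le_antisymm (not_lt.mp hp) (h12nn p₁)
              simp only [hχ, hp, if_false, mul_zero, h h0]
      _ = (if 0 < σ₀₁ q₂ then σ₀ (q₁, q₂) / σ₀₁ q₂ else 0) * σ₀₁ q₂ := by rw [← hc1]
      _ = (if 0 < σ₀₁ q₂ then σ₀ (q₁, q₂) else 0) := by
            split_ifs with h
            · rw [div_mul_cancel₀ _ (ne_of_gt h)]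
            · rw [zero_mul]
  have hmarg0 : ∀ᵐ q : ℝ × ℝ ∂volume, (∫ p₁, ∫ p₂, ρ₀ q.1 q.2 p₁ p₂) = σ₀ q := by
    filter_upwards [ae_snd_lift hM0, hT0] with q hM hT
    rw [hM q.1]
    by_cases h : 0 < σ₀₁ q.2
    · rw [if_pos h]
    · rw [if_neg h]
      exact (hT (le_antisymm (not_lt.mp h) (h01nn q.2))).symm
  -- σ₁ marginal
  have hmarg1 : ∀ᵐ pq : ℝ × ℝ ∂volume, (∫ q₁, ∫ p₂, ρ₀ q₁ pq.2 pq.1 p₂) = σ₁ pq := by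
    filter_upwards [ae_fst_lift hGχ, hT1, hT1'] with pq hGx hz1 hz1'
    have hstep : ∀ q₁, (∫ p₂, ρ₀ q₁ pq.2 pq.1 p₂) = F q₁ pq.2 pq.1 * χ pq.1 := by
      intro q₁
      simp only [hsplit]
      rw [integral_const_mul, hGx]
    calc (∫ q₁, ∫ p₂, ρ₀ q₁ pq.2 pq.1 p₂)
        = ∫ q₁, F q₁ pq.2 pq.1 * χ pq.1 := by simp only [hstep]
      _ = (∫ q₁, F q₁ pq.2 pq.1) * χ pq.1 := integral_mul_const _ _
      _ = (if 0 < σ₀₁ pq.2 then σ₁ (pq.1, pq.2) else 0) * χ pq.1 := by rw [hIF]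
      _ = σ₁ pq := by
          by_cases h1 : 0 < σ₀₁ pq.2
          · by_cases h2 : 0 < σ₁₂ pq.1
            · rw [if_pos h1]
              simp only [hχ, h2, if_true, mul_one]
            · have h0 : σ₁₂ pq.1 = 0 := le_antisymm (not_lt.mp h2) (h12nn _)
              rw [if_pos h1]
              simp only [hχ, h2, if_false, mul_zero]
              exact (hz1 h0).symm
          · have h0 : σ₀₁ pq.2 = 0 := le_antisymm (not_lt.mp h1) (h01nn _)
            rw [if_neg h1, zero_mul]
            exact (hz1' h0).symm
  -- measurability of σ₀₁ and σ₁₂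
  have hs01 : AEStronglyMeasurable σ₀₁ (volume : Measure ℝ) := by
    have h := (h₀int'.aestronglyMeasurable.prod_swap).integral_prod_right'
    exact h.congr (Filter.Eventually.of_forall fun q₂ => (hσ₀₁ q₂).symm)
  have hs12 : AEStronglyMeasurable σ₁₂ (volume : Measure ℝ) := by
    have h := h₁int'.aestronglyMeasurable.integral_prod_right'
    exact h.congr (Filter.Eventually.of_forall fun p₁ => (hσ₁₂ p₁).symm)
  -- σ₂ marginal: the key iterated integral of F
  have hKfact : ∀ᵐ p₁ : ℝ ∂volume, (∫ q₁, ∫ q₂, F q₁ q₂ p₁) = σ₁₂ p₁ := by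
    filter_upwards [h1secR, hT1'sec, h₁int'.aestronglyMeasurable.prodMk_left]
      with p₁ hint hvan haesm
    have hVaesm : AEStronglyMeasurable
        (fun q₂ => if 0 < σ₀₁ q₂ then σ₁ (p₁, q₂) / σ₀₁ q₂ else 0) (volume : Measure ℝ) :=
      aesm_ite_div hs01 haesm
    have hVnn : ∀ q₂, 0 ≤ (if 0 < σ₀₁ q₂ then σ₁ (p₁, q₂) / σ₀₁ q₂ else 0) := fun q₂ => by
      split_ifs with h
      · exact div_nonneg (h₁pos _) h.le
      · exact le_refl 0
    have hfun : ∀ z : ℝ × ℝ, F z.2 z.1 p₁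
        = (if 0 < σ₀₁ z.1 then σ₁ (p₁, z.1) / σ₀₁ z.1 else 0) * σ₀ (z.2, z.1) := by
      intro z
      simp only [hF]
      split_ifs with h
      · ring
      · simp
    have hw : ∀ q₂, (if 0 < σ₀₁ q₂ then σ₁ (p₁, q₂) / σ₀₁ q₂ else 0) * σ₀₁ q₂
        = (if 0 < σ₀₁ q₂ then σ₁ (p₁, q₂) else 0) := by
      intro q₂
      split_ifs with h
      · rw [div_mul_cancel₀ _ (ne_of_gt h)]
      · rw [zero_mul]
    have hwσ : (fun q₂ => if 0 < σ₀₁ q₂ then σ₁ (p₁, q₂) else 0)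
        =ᵐ[volume] fun q₂ => σ₁ (p₁, q₂) := by
      filter_upwards [hvan] with q₂ h
      by_cases hq : 0 < σ₀₁ q₂
      · rw [if_pos hq]
      · rw [if_neg hq, h (le_antisymm (not_lt.mp hq) (h01nn q₂))]
    have hu_aesm : AEStronglyMeasurable
        (fun z : ℝ × ℝ => (if 0 < σ₀₁ z.1 then σ₁ (p₁, z.1) / σ₀₁ z.1 else 0) * σ₀ (z.2, z.1))
        ((volume : Measure ℝ).prod volume) :=
      hVaesm.comp_fst.mul h₀int'.aestronglyMeasurable.prod_swap
    have hu_int : Integrable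
        (fun z : ℝ × ℝ => (if 0 < σ₀₁ z.1 then σ₁ (p₁, z.1) / σ₀₁ z.1 else 0) * σ₀ (z.2, z.1))
        ((volume : Measure ℝ).prod volume) := by
      rw [integrable_prod_iff hu_aesm]
      constructor
      · filter_upwards [h0secL] with q₂ hi
        exact hi.const_mul (if 0 < σ₀₁ q₂ then σ₁ (p₁, q₂) / σ₀₁ q₂ else 0)
      · have heq : ∀ q₂ : ℝ,
            (∫ q₁, ‖(if 0 < σ₀₁ q₂ then σ₁ (p₁, q₂) / σ₀₁ q₂ else 0) * σ₀ (q₁, q₂)‖)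
            = (if 0 < σ₀₁ q₂ then σ₁ (p₁, q₂) else 0) := by
          intro q₂
          have hnrm : ∀ q₁ : ℝ, ‖(if 0 < σ₀₁ q₂ then σ₁ (p₁, q₂) / σ₀₁ q₂ else 0) * σ₀ (q₁, q₂)‖
              = (if 0 < σ₀₁ q₂ then σ₁ (p₁, q₂) / σ₀₁ q₂ else 0) * σ₀ (q₁, q₂) :=
            fun q₁ => Real.norm_of_nonneg (mul_nonneg (hVnn q₂) (h₀pos _))
          simp only [hnrm]
          rw [integral_const_mul, ← hσ₀₁, hw]
        simp only [heq]
        exact hint.congr hwσ.symm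
    have hswap : (∫ q₁, ∫ q₂, F q₁ q₂ p₁) = ∫ q₂, ∫ q₁, F q₁ q₂ p₁ := by
      apply integral_integral_swap
      apply hu_int.swap.congr
      exact Filter.Eventually.of_forall fun z => (hfun (z.2, z.1)).symm
    rw [hswap]
    calc (∫ q₂, ∫ q₁, F q₁ q₂ p₁)
        = ∫ q₂, (if 0 < σ₀₁ q₂ then σ₁ (p₁, q₂) else 0) := by simp only [hIF]
      _ = ∫ q₂, σ₁ (p₁, q₂) := integral_congr_ae hwσ
      _ = σ₁₂ p₁ := (hσ₁₂ p₁).symm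
  have hmarg2 : ∀ᵐ pp : ℝ × ℝ ∂volume, (∫ q₁, ∫ q₂, ρ₀ q₁ q₂ pp.1 pp.2) = σ₂ pp := by
    filter_upwards [ae_fst_lift hKfact, hT2] with pp hK hz
    have hstep : ∀ q₁, (∫ q₂, ρ₀ q₁ q₂ pp.1 pp.2) = (∫ q₂, F q₁ q₂ pp.1) * G pp.1 pp.2 := by
      intro q₁
      simp only [hsplit]
      exact integral_mul_const _ _
    calc (∫ q₁, ∫ q₂, ρ₀ q₁ q₂ pp.1 pp.2)
        = ∫ q₁, (∫ q₂, F q₁ q₂ pp.1) * G pp.1 pp.2 := by simp only [hstep]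
      _ = (∫ q₁, ∫ q₂, F q₁ q₂ pp.1) * G pp.1 pp.2 := integral_mul_const _ _
      _ = σ₁₂ pp.1 * G pp.1 pp.2 := by rw [hK]
      _ = σ₂ pp := by
          by_cases h : 0 < σ₁₂ pp.1
          · simp only [hG, h, if_true]
            rw [mul_comm, div_mul_cancel₀ _ (ne_of_gt h)]
          · have h0 : σ₁₂ pp.1 = 0 := le_antisymm (not_lt.mp h) (h12nn _)
            simp only [hG, h, if_false, mul_zero]
            exact (hz h0).symm
  -- quasi-measure-preserving projections from ℝ⁴
  have hq_snd4 : Measure.QuasiMeasurePreserving (Prod.snd : ℝ × ℝ × ℝ × ℝ → ℝ × ℝ × ℝ)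
      volume volume := by
    rw [Measure.volume_eq_prod]; exact Measure.quasiMeasurePreserving_snd
  have hq_fst3 : Measure.QuasiMeasurePreserving (Prod.fst : ℝ × ℝ × ℝ → ℝ) volume volume := by
    rw [Measure.volume_eq_prod]; exact Measure.quasiMeasurePreserving_fst
  have hq_snd3 : Measure.QuasiMeasurePreserving (Prod.snd : ℝ × ℝ × ℝ → ℝ × ℝ) volume volume := by
    rw [Measure.volume_eq_prod]; exact Measure.quasiMeasurePreserving_snd
  have hq_fst2 : Measure.QuasiMeasurePreserving (Prod.fst : ℝ × ℝ → ℝ) volume volume := by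
    rw [Measure.volume_eq_prod]; exact Measure.quasiMeasurePreserving_fst
  have hq_pa : Measure.QuasiMeasurePreserving (fun z : ℝ × ℝ × ℝ × ℝ => z.2.1)
      volume volume := hq_fst3.comp hq_snd4
  have hq_pb : Measure.QuasiMeasurePreserving (fun z : ℝ × ℝ × ℝ × ℝ => z.2.2.1)
      volume volume := hq_fst2.comp (hq_snd3.comp hq_snd4)
  have hq_p2 : Measure.QuasiMeasurePreserving (fun z : ℝ × ℝ × ℝ × ℝ => z.2.2)
      volume volume := hq_snd3.comp hq_snd4
  have hq_π₀ : Measure.QuasiMeasurePreserving (fun z : ℝ × ℝ × ℝ × ℝ => (z.1, z.2.1))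
      volume volume := by
    have h1 : Measure.QuasiMeasurePreserving (Prod.fst : (ℝ × ℝ) × ℝ × ℝ → ℝ × ℝ)
        volume volume := by
      rw [Measure.volume_eq_prod]; exact Measure.quasiMeasurePreserving_fst
    have h2 : MeasurePreserving (MeasurableEquiv.prodAssoc : (ℝ × ℝ) × ℝ × ℝ ≃ᵐ ℝ × ℝ × ℝ × ℝ)
        volume volume := volume_preserving_prodAssoc
    exact h1.comp (h2.symm _).quasiMeasurePreserving
  have hq_π₁ : Measure.QuasiMeasurePreserving (fun z : ℝ × ℝ × ℝ × ℝ => (z.2.2.1, z.2.1))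
      volume volume := by
    have h1 : Measure.QuasiMeasurePreserving (Prod.fst : (ℝ × ℝ) × ℝ → ℝ × ℝ)
        volume volume := by
      rw [Measure.volume_eq_prod]; exact Measure.quasiMeasurePreserving_fst
    have h2 : MeasurePreserving (MeasurableEquiv.prodAssoc : (ℝ × ℝ) × ℝ ≃ᵐ ℝ × ℝ × ℝ)
        volume volume := volume_preserving_prodAssoc
    have h3 : Measure.QuasiMeasurePreserving (Prod.swap : ℝ × ℝ → ℝ × ℝ) volume volume := by
      rw [Measure.volume_eq_prod]
      exact Measure.measurePreserving_swap.quasiMeasurePreserving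
    exact h3.comp (h1.comp ((h2.symm _).quasiMeasurePreserving.comp hq_snd4))
  -- a.e. strong measurability of the full density
  obtain ⟨s₀, hs₀m, he₀⟩ := h₀int.aestronglyMeasurable
  obtain ⟨s₁', hs₁m, he₁⟩ := h₁int.aestronglyMeasurable
  obtain ⟨s₂', hs₂m, he₂⟩ := h₂int.aestronglyMeasurable
  obtain ⟨t₀₁, ht₀₁m, he₀₁⟩ := hs01
  obtain ⟨t₁₂, ht₁₂m, he₁₂⟩ := hs12
  have hΦaesm : AEStronglyMeasurable (fun z : ℝ × ℝ × ℝ × ℝ => ρ₀ z.1 z.2.1 z.2.2.1 z.2.2.2)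
      (volume : Measure (ℝ × ℝ × ℝ × ℝ)) := by
    refine ⟨fun z => if 0 < t₀₁ z.2.1 ∧ 0 < t₁₂ z.2.2.1 then
        s₀ (z.1, z.2.1) * s₁' (z.2.2.1, z.2.1) * s₂' z.2.2 / (t₀₁ z.2.1 * t₁₂ z.2.2.1)
      else 0, ?_, ?_⟩
    · apply Measurable.stronglyMeasurable
      refine Measurable.ite ?_ ?_ measurable_const
      · exact (measurableSet_lt measurable_const (ht₀₁m.measurable.comp hq_pa.measurable)).inter
          (measurableSet_lt measurable_const (ht₁₂m.measurable.comp hq_pb.measurable))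
      · exact (((hs₀m.measurable.comp hq_π₀.measurable).mul
          (hs₁m.measurable.comp hq_π₁.measurable)).mul
          (hs₂m.measurable.comp hq_p2.measurable)).div
          ((ht₀₁m.measurable.comp hq_pa.measurable).mul (ht₁₂m.measurable.comp hq_pb.measurable))
    · filter_upwards [hq_π₀.ae he₀, hq_π₁.ae he₁, hq_p2.ae he₂, hq_pa.ae he₀₁, hq_pb.ae he₁₂]
        with z e0 e1 e2 e01 e12
      have e0' : σ₀ (z.1, z.2.1) = s₀ (z.1, z.2.1) := e0
      have e1' : σ₁ (z.2.2.1, z.2.1) = s₁' (z.2.2.1, z.2.1) := e1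
      have e2' : σ₂ (z.2.2.1, z.2.2.2) = s₂' z.2.2 := e2
      have e01' : σ₀₁ z.2.1 = t₀₁ z.2.1 := e01
      have e12' : σ₁₂ z.2.2.1 = t₁₂ z.2.2.1 := e12
      rw [hρ₀, e0', e1', e2', e01', e12']
  have hΦaesm' : AEStronglyMeasurable (fun z : ℝ × ℝ × ℝ × ℝ => ρ₀ z.1 z.2.1 z.2.2.1 z.2.2.2)
      ((volume : Measure ℝ).prod (volume : Measure (ℝ × ℝ × ℝ))) := by
    rwa [Measure.volume_eq_prod] at hΦaesm
  -- the level-1 integrability and value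
  have hL1 : ∀ᵐ q₁ : ℝ ∂volume,
      Integrable (fun w : ℝ × ℝ × ℝ => ρ₀ q₁ w.1 w.2.1 w.2.2) (volume : Measure (ℝ × ℝ × ℝ)) ∧
      (∫ w : ℝ × ℝ × ℝ, ρ₀ q₁ w.1 w.2.1 w.2.2) = ∫ q₂, σ₀ (q₁, q₂) := by
    filter_upwards [hΦaesm'.prodMk_left, h0secR, hT0sec] with q₁ haesm1 h0R hT0q
    have haesm1' : AEStronglyMeasurable (fun w : ℝ × ℝ × ℝ => ρ₀ q₁ w.1 w.2.1 w.2.2)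
        ((volume : Measure ℝ).prod (volume : Measure (ℝ × ℝ))) := by
      rwa [Measure.volume_eq_prod] at haesm1
    have hL2 : ∀ᵐ q₂ : ℝ ∂volume,
        Integrable (fun v : ℝ × ℝ => ρ₀ q₁ q₂ v.1 v.2) (volume : Measure (ℝ × ℝ)) ∧
        (∫ v : ℝ × ℝ, ρ₀ q₁ q₂ v.1 v.2) = (if 0 < σ₀₁ q₂ then σ₀ (q₁, q₂) else 0) := by
      filter_upwards [haesm1'.prodMk_left, h1secL, hT1sw, hM0] with q₂ haesm2 h1L hsw hMq
      have haesm2' : AEStronglyMeasurable (fun v : ℝ × ℝ => ρ₀ q₁ q₂ v.1 v.2)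
          ((volume : Measure ℝ).prod (volume : Measure ℝ)) := by
        rwa [Measure.volume_eq_prod] at haesm2
      have hint2 : Integrable (fun v : ℝ × ℝ => ρ₀ q₁ q₂ v.1 v.2)
          ((volume : Measure ℝ).prod volume) := by
        rw [integrable_prod_iff haesm2']
        constructor
        · filter_upwards [hGint] with p₁ hGi
          exact (hGi.const_mul (F q₁ q₂ p₁)).congr
            (Filter.Eventually.of_forall fun p₂ => (hsplit q₁ q₂ p₁ p₂).symm)
        · apply Integrable.congr
            (h1L.const_mul (if 0 < σ₀₁ q₂ then σ₀ (q₁, q₂) / σ₀₁ q₂ else 0))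
          filter_upwards [hGχ, hsw] with p₁ h1 h2
          have e1 : (∫ p₂, ‖ρ₀ q₁ q₂ p₁ p₂‖) = F q₁ q₂ p₁ * χ p₁ := by
            rw [show (fun p₂ => ‖ρ₀ q₁ q₂ p₁ p₂‖) = fun p₂ => F q₁ q₂ p₁ * G p₁ p₂ from
              funext fun p₂ => by rw [Real.norm_of_nonneg (hnn _ _ _ _), hsplit]]
            rw [integral_const_mul, h1]
          have egoal : (if 0 < σ₀₁ q₂ then σ₀ (q₁, q₂) / σ₀₁ q₂ else 0) * σ₁ (p₁, q₂)
              = F q₁ q₂ p₁ * χ p₁ := by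
            by_cases hq : 0 < σ₁₂ p₁
            · simp only [hχ, hq, if_true, mul_one, hF]
              split_ifs with h
              · ring
              · simp
            · have h0 : σ₁₂ p₁ = 0 := le_antisymm (not_lt.mp hq) (h12nn _)
              simp only [hχ, hq, if_false, h2 h0, mul_zero]
          rw [egoal, ← e1]
      refine ⟨by rwa [← Measure.volume_eq_prod] at hint2, ?_⟩
      rw [Measure.volume_eq_prod, integral_prod _ hint2]
      exact hMq q₁
    have hint1 : Integrable (fun w : ℝ × ℝ × ℝ => ρ₀ q₁ w.1 w.2.1 w.2.2)
        ((volume : Measure ℝ).prod volume) := by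
      rw [integrable_prod_iff haesm1']
      constructor
      · filter_upwards [hL2] with q₂ h
        exact h.1
      · apply Integrable.congr h0R
        filter_upwards [hL2, hT0q] with q₂ h ht
        have hni : (∫ v : ℝ × ℝ, ‖ρ₀ q₁ q₂ v.1 v.2‖) = ∫ v : ℝ × ℝ, ρ₀ q₁ q₂ v.1 v.2 :=
          integral_congr_ae (Filter.Eventually.of_forall fun v =>
            Real.norm_of_nonneg (hnn _ _ _ _))
        have : (∫ v : ℝ × ℝ, ‖ρ₀ q₁ q₂ v.1 v.2‖) = σ₀ (q₁, q₂) := by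
          rw [hni, h.2]
          by_cases hq : 0 < σ₀₁ q₂
          · rw [if_pos hq]
          · rw [if_neg hq]
            exact (ht (le_antisymm (not_lt.mp hq) (h01nn _))).symm
        exact this.symm
    refine ⟨by rwa [← Measure.volume_eq_prod] at hint1, ?_⟩
    rw [Measure.volume_eq_prod, integral_prod _ hint1]
    apply integral_congr_ae
    filter_upwards [hL2, hT0q] with q₂ h ht
    rw [h.2]
    by_cases hq : 0 < σ₀₁ q₂
    · rw [if_pos hq]
    · rw [if_neg hq]
      exact (ht (le_antisymm (not_lt.mp hq) (h01nn _))).symm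
  have hΦint : Integrable (fun z : ℝ × ℝ × ℝ × ℝ => ρ₀ z.1 z.2.1 z.2.2.1 z.2.2.2)
      (volume : Measure (ℝ × ℝ × ℝ × ℝ)) := by
    rw [Measure.volume_eq_prod, integrable_prod_iff hΦaesm']
    constructor
    · filter_upwards [hL1] with q₁ h
      exact h.1
    · apply Integrable.congr h₀int'.integral_prod_left
      filter_upwards [hL1] with q₁ h
      rw [← h.2]
      exact integral_congr_ae (Filter.Eventually.of_forall fun w =>
        (Real.norm_of_nonneg (hnn _ _ _ _)).symm)
  have htot : (∫ z : ℝ × ℝ × ℝ × ℝ, ρ₀ z.1 z.2.1 z.2.2.1 z.2.2.2) = 1 := by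
    have hΦint2 : Integrable (fun z : ℝ × ℝ × ℝ × ℝ => ρ₀ z.1 z.2.1 z.2.2.1 z.2.2.2)
        ((volume : Measure ℝ).prod volume) := by
      rwa [Measure.volume_eq_prod] at hΦint
    rw [Measure.volume_eq_prod, integral_prod _ hΦint2]
    have h1 : (∫ q₁, ∫ w : ℝ × ℝ × ℝ, ρ₀ q₁ w.1 w.2.1 w.2.2) = ∫ q₁, ∫ q₂, σ₀ (q₁, q₂) :=
      integral_congr_ae (by filter_upwards [hL1] with q₁ h using h.2)
    have h0 : (∫ q₁, ∫ q₂, σ₀ (q₁, q₂)) = 1 := by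
      rw [MeasureTheory.integral_integral (f := fun q₁ q₂ => σ₀ (q₁, q₂)) h₀int']
      rw [← Measure.volume_eq_prod]
      exact h₀norm
    exact h1.trans h0
  exact ⟨hnn, hΦint, htot, hmarg0, hmarg1, hmarg2⟩
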